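/- (Unbiasedness of the TWO-NN maximum likelihood estimator.) Let d > 0 and let n ≥ 2 be an integer. Let μ₁, …, μ_n be i.i.d. random variables, each following the Pareto(1, d) distribution. Then the estimator d̂ = (n−1)/(Σ_{i=1}^{n} log μ_i) is integrable and satisfies E[d̂] = d. -/

import Mathlib

open MeasureTheory ProbabilityTheory Real Finset

section Aux
open Set


lemma auxA {a : ℝ} (ha : 0 < a) :
    ∫⁻ s in Ioi (0:ℝ), ENNReal.ofReal (rexp (-s * a)) = ENNReal.ofReal a⁻¹ := by
  have h1 : ∫⁻ x, exponentialPDF a x = 1 := lintegral_exponentialPDF_eq_one ha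
  rw [← lintegral_add_compl _ (measurableSet_Iio (a := (0:ℝ))),
    lintegral_exponentialPDF_of_nonpos le_rfl, zero_add, compl_Iio] at h1
  have h2 : ∫⁻ x in Ici (0:ℝ), exponentialPDF a x
      = ENNReal.ofReal a * ∫⁻ x in Ici (0:ℝ), ENNReal.ofReal (rexp (-(a * x))) := by
    rw [← lintegral_const_mul _ (by fun_prop)]
    refine setLIntegral_congr_fun measurableSet_Ici (fun x hx => ?_)
    rw [exponentialPDF_of_nonneg hx, ENNReal.ofReal_mul ha.le]
  have h3 : ∫⁻ x in Ici (0:ℝ), ENNReal.ofReal (rexp (-(a * x)))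
      = ∫⁻ s in Ioi (0:ℝ), ENNReal.ofReal (rexp (-s * a)) := by
    rw [← setLIntegral_congr Ioi_ae_eq_Ici]
    refine setLIntegral_congr_fun measurableSet_Ioi (fun x _ => ?_)
    ring_nf
  rw [h2, h3] at h1
  have ha' : ENNReal.ofReal a ≠ 0 := by simp [ha, ha.not_ge]
  have := (ENNReal.eq_div_iff ha' ENNReal.ofReal_ne_top).mpr h1
  rw [this, one_div, ← ENNReal.ofReal_inv_of_pos ha]

lemma auxB {d s : ℝ} (hd : 0 < d) (hs : 0 ≤ s) :
    ∫⁻ x, ENNReal.ofReal (rexp (-s * Real.log x)) ∂(paretoMeasure 1 d)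
      = ENNReal.ofReal (d / (d + s)) := by
  have hpdf : Measurable (paretoPDF 1 d) := (measurable_paretoPDFReal 1 d).ennreal_ofReal
  rw [paretoMeasure, lintegral_withDensity_eq_lintegral_mul _ hpdf (((Real.measurable_log.const_mul (-s)).exp).ennreal_ofReal)]
  have hsplit : ∫⁻ x, (paretoPDF 1 d * fun x => ENNReal.ofReal (rexp (-s * Real.log x))) x
      = ∫⁻ x in Ici (1:ℝ), ENNReal.ofReal (d * x ^ (-(d + s + 1))) := by
    rw [← lintegral_add_compl _ (measurableSet_Iio (a := (1:ℝ)))]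
    have h0 : ∫⁻ x in Iio (1:ℝ),
        (paretoPDF 1 d * fun x => ENNReal.ofReal (rexp (-s * Real.log x))) x = 0 := by
      rw [setLIntegral_congr_fun (g := fun _ => 0) measurableSet_Iio
        (fun x hx => by simp [paretoPDF_of_lt hx]), lintegral_zero]
    rw [h0, zero_add, compl_Iio]
    refine setLIntegral_congr_fun measurableSet_Ici (fun x hx => ?_)
    have hx0 : (0:ℝ) < x := lt_of_lt_of_le one_pos hx
    rw [Pi.mul_apply, paretoPDF_of_le hx, ← ENNReal.ofReal_mul (by positivity)]
    congr 1
    have hexp : rexp (-s * Real.log x) = x ^ (-s) := by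
      rw [Real.rpow_def_of_pos hx0, mul_comm]
    have he : -(d + 1) + -s = -(d + s + 1) := by ring
    rw [one_rpow, mul_one, hexp, mul_assoc, ← Real.rpow_add hx0, he]
  rw [hsplit, ← setLIntegral_congr (Ioi_ae_eq_Ici (a := (1:ℝ)))]
  have hii : IntegrableOn (fun x : ℝ => d * x ^ (-(d + s + 1))) (Ioi 1) :=
    (integrableOn_Ioi_rpow_of_lt (by linarith) one_pos).const_mul d
  rw [← ofReal_integral_eq_lintegral_ofReal hii
    ((ae_restrict_iff' measurableSet_Ioi).mpr (ae_of_all _ fun x hx => by have : (0:ℝ) < x := lt_trans one_pos hx; positivity))]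
  congr 1
  rw [integral_const_mul, integral_Ioi_rpow_of_lt (by linarith) one_pos, one_rpow]
  have h1 : -(d + s + 1) + 1 = -(d + s) := by ring
  rw [h1]
  rw [neg_div_neg_eq, mul_one_div]

lemma auxC {d : ℝ} (hd : 0 < d) {n : ℕ} (hn : 2 ≤ n) :
    ∫⁻ s in Ioi (0:ℝ), ENNReal.ofReal ((d / (d + s)) ^ n)
      = ENNReal.ofReal (d / ((n : ℝ) - 1)) := by
  have hn1 : (1:ℝ) < (n:ℝ) := by exact_mod_cast lt_of_lt_of_le one_lt_two hn
  have hcongr : ∫⁻ s in Ioi (0:ℝ), ENNReal.ofReal ((d / (d + s)) ^ n)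
      = ∫⁻ s in Ioi (0:ℝ), ENNReal.ofReal (d ^ n * (d + s) ^ (-(n:ℝ))) := by
    refine setLIntegral_congr_fun measurableSet_Ioi (fun s hs => ?_)
    have h1 : (0:ℝ) < d + s := by
      have : (0:ℝ) < s := hs
      positivity
    rw [div_pow, Real.rpow_neg h1.le, Real.rpow_natCast, div_eq_mul_inv]
  rw [hcongr]
  have hmp : MeasurePreserving (fun x : ℝ => d + x) volume volume :=
    measurePreserving_add_left volume d
  have hemb : MeasurableEmbedding (fun x : ℝ => d + x) := by
    have := (MeasurableEquiv.addLeft d).measurableEmbedding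
    simpa using this
  have htrans := hmp.setLIntegral_comp_emb hemb
    (fun x => ENNReal.ofReal (d ^ n * x ^ (-(n:ℝ)))) (Ioi 0)
  rw [htrans, Set.image_const_add_Ioi, add_zero]
  have hii : IntegrableOn (fun x : ℝ => d ^ n * x ^ (-(n:ℝ))) (Ioi d) :=
    (integrableOn_Ioi_rpow_of_lt (by linarith) hd).const_mul _
  rw [← ofReal_integral_eq_lintegral_ofReal hii
    ((ae_restrict_iff' measurableSet_Ioi).mpr (ae_of_all _ fun x hx => by
      have : (0:ℝ) < x := lt_trans hd hx
      positivity))]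
  congr 1
  rw [integral_const_mul, integral_Ioi_rpow_of_lt (by linarith) hd]
  have he : -(n:ℝ) + 1 = -((n:ℝ) - 1) := by ring
  rw [he, neg_div_neg_eq, ← mul_div_assoc]
  congr 1
  rw [← Real.rpow_natCast d n, ← Real.rpow_add hd]
  have : (n:ℝ) + -((n:ℝ) - 1) = 1 := by ring
  rw [this, Real.rpow_one]

end Aux

section Main
open Set

/-- **Unbiasedness of the TWO-NN maximum likelihood estimator.**
Let `d > 0`, `n ≥ 2`, and let `μ 0, …, μ (n-1)` be i.i.d. `Pareto(1, d)` random variables.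
Then the estimator `d̂ = (n−1) / (∑ i, log (μ i))` is integrable and `E[d̂] = d`. -/
theorem twoNN_mle_unbiased
    {Ω : Type*} [MeasurableSpace Ω] (P : Measure Ω) [IsProbabilityMeasure P]
    (d : ℝ) (hd : 0 < d) (n : ℕ) (hn : 2 ≤ n)
    (μ : Fin n → Ω → ℝ) (hμmeas : ∀ i, Measurable (μ i))
    (hindep : iIndepFun μ P)
    (hlaw : ∀ i, Measure.map (μ i) P = paretoMeasure 1 d) :
    Integrable (fun ω => ((n : ℝ) - 1) / ∑ i, Real.log (μ i ω)) P ∧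
    ∫ ω, ((n : ℝ) - 1) / ∑ i, Real.log (μ i ω) ∂P = d := by
  classical
  have hn0 : 0 < n := by omega
  haveI : Nonempty (Fin n) := ⟨⟨0, hn0⟩⟩
  have hn1 : (0:ℝ) < (n:ℝ) - 1 := by
    have : (2:ℝ) ≤ (n:ℝ) := by exact_mod_cast hn
    linarith
  set S : Ω → ℝ := fun ω => ∑ i, Real.log (μ i ω) with hSdef
  have hSmeas : Measurable S :=
    Finset.measurable_sum _ (fun i _ => Real.measurable_log.comp (hμmeas i))
  set X : Fin n → Ω → ℝ := fun i => Real.log ∘ μ i with hXdef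
  have hXmeas : ∀ i, Measurable (X i) := fun i => Real.measurable_log.comp (hμmeas i)
  have hXindep : iIndepFun X P :=
    hindep.comp _ (fun _ => Real.measurable_log)
  have hSX : ∀ ω, (∑ i, X i) ω = S ω := fun ω => by simp [hXdef, hSdef]
  -- a.e. positivity
  have hμpos : ∀ᵐ ω ∂P, ∀ i, 1 < μ i ω := by
    rw [ae_all_iff]
    intro i
    have hnull : P (μ i ⁻¹' Iic 1) = 0 := by
      rw [← Measure.map_apply (hμmeas i) measurableSet_Iic, hlaw i, paretoMeasure,
        withDensity_apply _ measurableSet_Iic,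
        ← setLIntegral_congr (Iio_ae_eq_Iic (a := (1:ℝ)))]
      exact lintegral_paretoPDF_of_le le_rfl
    have hset : {ω | ¬ 1 < μ i ω} = μ i ⁻¹' Iic 1 := by
      ext ω; simp [not_lt]
    rw [ae_iff, hset]
    exact hnull
  have hSpos : ∀ᵐ ω ∂P, 0 < S ω := by
    filter_upwards [hμpos] with ω hω
    exact Finset.sum_pos (fun i _ => Real.log_pos (hω i)) Finset.univ_nonempty
  -- inner integral for fixed s > 0
  have hinner : ∀ s : ℝ, 0 < s →
      ∫⁻ ω, ENNReal.ofReal (rexp (-s * S ω)) ∂P = ENNReal.ofReal ((d / (d + s)) ^ n) := by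
    intro s hs
    have hint : ∀ i, Integrable (fun ω => rexp (-s * X i ω)) P := by
      intro i
      refine Integrable.mono' (integrable_const 1)
        (((hXmeas i).const_mul (-s)).exp.aestronglyMeasurable) ?_
      filter_upwards [hμpos] with ω hω
      rw [Real.norm_of_nonneg (exp_pos _).le]
      have hlog : 0 < X i ω := Real.log_pos (hω i)
      calc rexp (-s * X i ω) ≤ rexp 0 := exp_le_exp.mpr (by nlinarith)
        _ = 1 := exp_zero
    have hsum : Integrable (fun ω => rexp (-s * (∑ i, X i) ω)) P :=
      hXindep.integrable_exp_mul_sum hXmeas (fun i _ => hint i)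
    have hmgfi : ∀ i, mgf (X i) P (-s) = d / (d + s) := by
      intro i
      have h1 : ENNReal.ofReal (mgf (X i) P (-s)) = ENNReal.ofReal (d / (d + s)) := by
        rw [mgf, ofReal_integral_eq_lintegral_ofReal (hint i)
          (ae_of_all _ fun ω => (exp_pos _).le)]
        have hmap : ∫⁻ ω, ENNReal.ofReal (rexp (-s * X i ω)) ∂P
            = ∫⁻ x, ENNReal.ofReal (rexp (-s * Real.log x)) ∂(Measure.map (μ i) P) :=
          (lintegral_map (((Real.measurable_log.const_mul (-s)).exp).ennreal_ofReal)
            (hμmeas i)).symm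
        rw [hmap, hlaw i]
        exact auxB hd hs.le
      exact (ENNReal.ofReal_eq_ofReal_iff (mgf_nonneg) (by positivity)).mp h1
    have hcongr : ∫⁻ ω, ENNReal.ofReal (rexp (-s * S ω)) ∂P
        = ∫⁻ ω, ENNReal.ofReal (rexp (-s * (∑ i, X i) ω)) ∂P := by
      refine lintegral_congr fun ω => ?_
      rw [hSX]
    rw [hcongr, ← ofReal_integral_eq_lintegral_ofReal hsum
      (ae_of_all _ fun ω => (exp_pos _).le)]
    have hm : ∫ ω, rexp (-s * (∑ i, X i) ω) ∂P = mgf (∑ i, X i) P (-s) := rfl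
    rw [hm, hXindep.mgf_sum hXmeas Finset.univ,
      Finset.prod_congr rfl (fun i _ => hmgfi i), Finset.prod_const, Finset.card_univ,
      Fintype.card_fin]
  -- key computation
  have hprodmeas : Measurable (fun p : Ω × ℝ => ENNReal.ofReal (rexp (-p.2 * S p.1))) :=
    ((measurable_snd.neg.mul (hSmeas.comp measurable_fst)).exp).ennreal_ofReal
  have key : ∫⁻ ω, ENNReal.ofReal (((n:ℝ) - 1) / S ω) ∂P = ENNReal.ofReal d := by
    have h1 : ∀ᵐ ω ∂P, ENNReal.ofReal (((n:ℝ) - 1) / S ω)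
        = ENNReal.ofReal ((n:ℝ) - 1)
          * ∫⁻ s in Ioi (0:ℝ), ENNReal.ofReal (rexp (-s * S ω)) := by
      filter_upwards [hSpos] with ω hω
      rw [auxA hω, ← ENNReal.ofReal_mul hn1.le, div_eq_mul_inv]
    rw [lintegral_congr_ae h1, lintegral_const_mul _ (Measurable.lintegral_prod_right (f := fun ω s => ENNReal.ofReal (rexp (-s * S ω))) hprodmeas)]
    have hswap : ∫⁻ ω, (∫⁻ s in Ioi (0:ℝ), ENNReal.ofReal (rexp (-s * S ω))) ∂P
        = ∫⁻ s in Ioi (0:ℝ), ∫⁻ ω, ENNReal.ofReal (rexp (-s * S ω)) ∂P :=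
      lintegral_lintegral_swap hprodmeas.aemeasurable
    rw [hswap, setLIntegral_congr_fun measurableSet_Ioi (fun s hs => hinner s hs),
      auxC hd hn, ← ENNReal.ofReal_mul hn1.le, mul_comm, div_mul_cancel₀ _ (ne_of_gt hn1)]
  -- conclude
  have hfmeas : Measurable (fun ω => ((n:ℝ) - 1) / S ω) := measurable_const.div hSmeas
  have hfnn : ∀ᵐ ω ∂P, 0 ≤ ((n:ℝ) - 1) / S ω := by
    filter_upwards [hSpos] with ω hω
    exact div_nonneg hn1.le hω.le
  have hintf : Integrable (fun ω => ((n:ℝ) - 1) / S ω) P := by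
    refine ⟨hfmeas.aestronglyMeasurable, ?_⟩
    rw [hasFiniteIntegral_iff_norm]
    have : ∫⁻ ω, ENNReal.ofReal ‖((n:ℝ) - 1) / S ω‖ ∂P = ENNReal.ofReal d := by
      rw [← key]
      refine lintegral_congr_ae ?_
      filter_upwards [hfnn] with ω hω
      rw [Real.norm_of_nonneg hω]
    rw [this]
    exact ENNReal.ofReal_lt_top
  refine ⟨hintf, ?_⟩
  rw [integral_eq_lintegral_of_nonneg_ae hfnn hfmeas.aestronglyMeasurable, key,
    ENNReal.toReal_ofReal hd.le]

end Main
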